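/- Let n ≥ k ≥ 2, let 𝔽 be a field and let S_k ⊆ C([n],k). If a (k−1)-subset V of [n] is simplicial in the k-hyperclique complex ⟨S_k⟩, then supp(δ^{k−1}V) is a cocircuit of Sim_k^n(S_k). -/

import Mathlib

/-!
Common definitions for simplicial matroids, following Cordovil–Lemos–Linhares Sales,
"Dirac's theorem on simplicial matroids".

We model `[n] = {1,…,n}` by `Fin n`, and a subset of `[n]` by a `Finset (Fin n)`.
A family `S_k ⊆ C([n],k)` is a `Finset (Finset (Fin n))` (all of whose members
have cardinality `k`, which is imposed by hypotheses in the theorems).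
-/

open Finset

/-- The incidence number `[F' : F]`: if `F = i₁ < i₂ < ⋯ < iₘ` and `F' = F \ {iⱼ}`
then `[F' : F] = (-1)ʲ` (with `j` the 1-based position of the deleted element),
and `[F' : F] = 0` otherwise. -/
def inc {n : ℕ} (F' F : Finset (Fin n)) : ℤ :=
  ∑ i ∈ F, if F' = F.erase i then (-1 : ℤ) ^ (F.filter (fun j => j ≤ i)).card else 0

/-- The family `C([n], m)` of `m`-element subsets of `[n]`, as a type. -/
abbrev Csets (n m : ℕ) := {F : Finset (Fin n) // F.card = m}

/-- `∂_k F`, the boundary of a single `k`-subset `F` of `[n]`,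
as a vector of `𝔽^{C([n],k-1)}`. -/
def bvec (𝔽 : Type*) [Field 𝔽] (n k : ℕ) (F : Finset (Fin n)) : Csets n (k - 1) → 𝔽 :=
  fun F' => ((inc F'.1 F : ℤ) : 𝔽)

/-- Independence in the simplicial matroid `Sim_k^n(S_k)` over `𝔽`:
`X ⊆ S_k` is independent iff the vectors `∂_k F`, `F ∈ X`, are linearly independent. -/
def SimIndep (𝔽 : Type*) [Field 𝔽] (n k : ℕ) (Sk X : Finset (Finset (Fin n))) : Prop :=
  X ⊆ Sk ∧ LinearIndependent 𝔽 (fun F : X => bvec 𝔽 n k F.1)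

/-- A circuit of `Sim_k^n(S_k)`: a minimal dependent subset of the ground set. -/
def SimCircuit (𝔽 : Type*) [Field 𝔽] (n k : ℕ) (Sk C : Finset (Finset (Fin n))) : Prop :=
  C ⊆ Sk ∧ ¬ LinearIndependent 𝔽 (fun F : C => bvec 𝔽 n k F.1) ∧
    ∀ C' ⊂ C, LinearIndependent 𝔽 (fun F : C' => bvec 𝔽 n k F.1)

/-- The rank (in `Sim_k^n`) of a set `X` of `k`-subsets of `[n]`:
the dimension of the span of the boundaries of its members. -/
noncomputable def simRank (𝔽 : Type*) [Field 𝔽] (n k : ℕ) (X : Finset (Finset (Fin n))) : ℕ :=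
  Module.finrank 𝔽 (Submodule.span 𝔽 ((fun F => bvec 𝔽 n k F) '' (X : Set (Finset (Fin n)))))

/-- A cocircuit of `Sim_k^n(S_k)`, i.e. a circuit of the dual matroid:
a minimal set `C ⊆ S_k` whose complement does not span (`X` is independent in the dual
matroid iff `r(E ∖ X) = r(E)`). -/
def SimCocircuit (𝔽 : Type*) [Field 𝔽] (n k : ℕ) (Sk C : Finset (Finset (Fin n))) : Prop :=
  C ⊆ Sk ∧ simRank 𝔽 n k (Sk \ C) < simRank 𝔽 n k Sk ∧
    ∀ C' ⊂ C, simRank 𝔽 n k (Sk \ C') = simRank 𝔽 n k Sk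

/-- The boundary map `∂_k : 𝔽^{S_k} → 𝔽^{C([n],k-1)}`. -/
noncomputable def bdryMap (𝔽 : Type*) [Field 𝔽] (n k : ℕ) (Sk : Finset (Finset (Fin n))) :
    (↥Sk → 𝔽) →ₗ[𝔽] (Csets n (k - 1) → 𝔽) :=
  Matrix.mulVecLin (Matrix.of fun (F' : Csets n (k - 1)) (F : ↥Sk) => ((inc F'.1 F.1 : ℤ) : 𝔽))

/-- The coboundary `δ^{k-1} V` of a `(k-1)`-subset `V` of `[n]`,
as a vector of `𝔽^{S_k}`; its `F`-coordinate is `[V : F]`. -/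
def cobdry (𝔽 : Type*) [Field 𝔽] {n : ℕ} (Sk : Finset (Finset (Fin n)))
    (V : Finset (Fin n)) : ↥Sk → 𝔽 :=
  fun F => ((inc V F.1 : ℤ) : 𝔽)

/-- The boundary `∂_{k+1} X` of a `(k+1)`-subset `X` of `[n]`, regarded as a vector
of `𝔽^{S_k}`; its `F`-coordinate is `[F : X]`. -/
def pbdry (𝔽 : Type*) [Field 𝔽] {n : ℕ} (Sk : Finset (Finset (Fin n)))
    (X : Finset (Fin n)) : ↥Sk → 𝔽 :=
  fun F => ((inc F.1 X : ℤ) : 𝔽)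

open scoped Classical in
/-- The support of a vector of `𝔽^{S_k}`, as a set of `k`-subsets of `[n]`. -/
noncomputable def suppFin {𝔽 : Type*} [Field 𝔽] {n : ℕ} {Sk : Finset (Finset (Fin n))}
    (v : ↥Sk → 𝔽) : Finset (Finset (Fin n)) :=
  (Sk.attach.filter fun F => v F ≠ 0).image Subtype.val

/-- `supp(δ^{k-1} V) ⊆ S_k`. -/
noncomputable def suppδ (𝔽 : Type*) [Field 𝔽] {n : ℕ} (Sk : Finset (Finset (Fin n)))
    (V : Finset (Fin n)) : Finset (Finset (Fin n)) :=
  suppFin (cobdry 𝔽 Sk V)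

/-- The cocircuit space of `Sim_k^n(S_k)`: the orthogonal complement, with respect to the
standard bilinear form on `𝔽^{S_k}`, of the circuit space `ker ∂_k`. -/
noncomputable def cocircSpace (𝔽 : Type*) [Field 𝔽] (n k : ℕ) (Sk : Finset (Finset (Fin n))) :
    Submodule 𝔽 (↥Sk → 𝔽) where
  carrier := {w | ∀ v ∈ LinearMap.ker (bdryMap 𝔽 n k Sk), ∑ F, v F * w F = 0}
  zero_mem' := by intro v hv; simp
  add_mem' := by
    intro a b ha hb v hv
    have h1 := ha v hv
    have h2 := hb v hv
    simp only [Pi.add_apply, mul_add, Finset.sum_add_distrib]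
    rw [h1, h2, add_zero]
  smul_mem' := by
    intro c w hw v hv
    have h := hw v hv
    simp only [Pi.smul_apply, smul_eq_mul]
    calc ∑ F, v F * (c * w F) = ∑ F, c * (v F * w F) := by
          exact Finset.sum_congr rfl fun F _ => by ring
      _ = c * ∑ F, v F * w F := (Finset.mul_sum _ _ _).symm
      _ = 0 := by rw [h, mul_zero]

/-- The faces of the `k`-hyperclique complex `⟨S_k⟩`: all `F ⊆ [n]` with `|F| < k`,
together with all `F` every `k`-element subset of which lies in `S_k`. -/
def IsFace {n : ℕ} (k : ℕ) (Sk : Finset (Finset (Fin n))) (F : Finset (Fin n)) : Prop :=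
  F.card < k ∨ ∀ G ⊆ F, G.card = k → G ∈ Sk

/-- A facet of `⟨S_k⟩`: an inclusion-maximal face. -/
def IsFacet {n : ℕ} (k : ℕ) (Sk : Finset (Finset (Fin n))) (F : Finset (Fin n)) : Prop :=
  IsFace k Sk F ∧ ∀ G, IsFace k Sk G → F ⊆ G → F = G

/-- `V` is simplicial in `⟨S_k⟩` if there is exactly one facet `X` of `⟨S_k⟩`
with `V ⊊ X`. -/
def SimplicialFace {n : ℕ} (k : ℕ) (Sk : Finset (Finset (Fin n))) (V : Finset (Fin n)) : Prop :=
  ∃! X, IsFacet k Sk X ∧ V ⊂ X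

/-- The `k`-skeleta of the complexes `Δ_0 = ⟨S_k⟩`, `Δ_{j+1} = Δ_j ∖∖ V_j`, where
`Δ ∖∖ V = ⟨(skeleton of Δ) ∖ supp(δ^{k-1} V)⟩` (0-indexed). -/
noncomputable def delSeq (𝔽 : Type*) [Field 𝔽] {n : ℕ} (Sk : Finset (Finset (Fin n)))
    (V : ℕ → Finset (Fin n)) : ℕ → Finset (Finset (Fin n))
  | 0 => Sk
  | j + 1 => delSeq 𝔽 Sk V j \ suppδ 𝔽 (delSeq 𝔽 Sk V j) (V j)

/-- `C*_j := supp(δ^{k-1} V_j) ∖ ⋃_{i<j} supp(δ^{k-1} V_i)` (0-indexed). -/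
noncomputable def Cstar (𝔽 : Type*) [Field 𝔽] {n : ℕ} (Sk : Finset (Finset (Fin n)))
    (V : ℕ → Finset (Fin n)) (j : ℕ) : Finset (Finset (Fin n)) :=
  suppδ 𝔽 Sk (V j) \ (Finset.range j).biUnion (fun i => suppδ 𝔽 Sk (V i))

/-- `(V_1,…,V_r)` (0-indexed: `V 0, …, V (r-1)`) is a basic linear sequence for `⟨S_k⟩`,
where `r` is the rank of `Sim_k^n(S_k)`: each `V_j` is a `(k-1)`-subset of `[n]` and each
`C*_j` is a cocircuit of `Sim_k^n(S_k(Δ_{j-1}))`. -/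
def BasicLinearSeq (𝔽 : Type*) [Field 𝔽] (n k : ℕ) (Sk : Finset (Finset (Fin n))) (r : ℕ)
    (V : ℕ → Finset (Fin n)) : Prop :=
  simRank 𝔽 n k Sk = r ∧ (∀ j < r, (V j).card = k - 1) ∧
    ∀ j < r, SimCocircuit 𝔽 n k (delSeq 𝔽 Sk V j) (Cstar 𝔽 Sk V j)

/-- `⟨S_k⟩` is D-perfect: there is a basic linear sequence `V_1,…,V_r` such that each `V_j`
is simplicial in `Δ_{j-1}`. -/
def DPerfect (𝔽 : Type*) [Field 𝔽] (n k : ℕ) (Sk : Finset (Finset (Fin n))) : Prop :=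
  ∃ V : ℕ → Finset (Fin n),
    BasicLinearSeq 𝔽 n k Sk (simRank 𝔽 n k Sk) V ∧
      ∀ j < simRank 𝔽 n k Sk, SimplicialFace k (delSeq 𝔽 Sk V j) (V j)

/-- A flat of `Sim_k^n(S_k)`: a closed subset of the ground set. -/
def SimFlat (𝔽 : Type*) [Field 𝔽] (n k : ℕ) (Sk X : Finset (Finset (Fin n))) : Prop :=
  X ⊆ Sk ∧ ∀ F ∈ Sk,
    bvec 𝔽 n k F ∈ Submodule.span 𝔽 ((fun G => bvec 𝔽 n k G) '' (X : Set (Finset (Fin n)))) →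
      F ∈ X

/-- A hyperplane of `Sim_k^n(S_k)`: a flat of rank one less than the rank of the matroid. -/
def SimHyperplane (𝔽 : Type*) [Field 𝔽] (n k : ℕ) (Sk H : Finset (Finset (Fin n))) : Prop :=
  SimFlat 𝔽 n k Sk H ∧ simRank 𝔽 n k H + 1 = simRank 𝔽 n k Sk

/-- A modular flat of `Sim_k^n(S_k)`:
`r(X) + r(Y) = r(X ∪ Y) + r(X ∩ Y)` for every flat `Y`. -/
def ModularFlat (𝔽 : Type*) [Field 𝔽] (n k : ℕ) (Sk X : Finset (Finset (Fin n))) : Prop :=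
  SimFlat 𝔽 n k Sk X ∧ ∀ Y, SimFlat 𝔽 n k Sk Y →
    simRank 𝔽 n k X + simRank 𝔽 n k Y = simRank 𝔽 n k (X ∪ Y) + simRank 𝔽 n k (X ∩ Y)

open scoped Classical in
/-- The closure of `X` in `Sim_k^n(S_k)`. -/
noncomputable def simClosure (𝔽 : Type*) [Field 𝔽] (n k : ℕ)
    (Sk X : Finset (Finset (Fin n))) : Finset (Finset (Fin n)) :=
  Sk.filter fun F =>
    bvec 𝔽 n k F ∈ Submodule.span 𝔽 ((fun G => bvec 𝔽 n k G) '' (X : Set (Finset (Fin n))))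

/-- `Sim_k^n(S_k)` is supersolvable: it admits a maximal chain of modular flats
`cl(∅) = X_0 ⊊ X_1 ⊊ ⋯ ⊊ X_r = S_k`, `r` the rank. -/
def Supersolvable (𝔽 : Type*) [Field 𝔽] (n k : ℕ) (Sk : Finset (Finset (Fin n))) : Prop :=
  ∃ X : ℕ → Finset (Finset (Fin n)),
    X 0 = simClosure 𝔽 n k Sk ∅ ∧ X (simRank 𝔽 n k Sk) = Sk ∧
      (∀ i < simRank 𝔽 n k Sk, X i ⊂ X (i + 1)) ∧
      ∀ i ≤ simRank 𝔽 n k Sk, ModularFlat 𝔽 n k Sk (X i)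

/-- `H` is a dense hyperplane of `Sim_k^n(ground)`: a hyperplane of the form
`ground ∖ supp(δ^{k-1} V)` for some `(k-1)`-subset `V` simplicial in `⟨ground⟩`. -/
def DenseHyp (𝔽 : Type*) [Field 𝔽] (n k : ℕ) (ground H : Finset (Finset (Fin n))) : Prop :=
  SimHyperplane 𝔽 n k ground H ∧
    ∃ V : Finset (Fin n), V.card = k - 1 ∧ SimplicialFace k ground V ∧
      H = ground \ suppδ 𝔽 ground V

/-- `Sim_k^n(S_k)` is superdense: there is a chain `∅ = X_0 ⊊ X_1 ⊊ ⋯ ⊊ X_r = S_k` of flats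
(`r` the rank) with each `X_i` a dense hyperplane of `Sim_k^n(X_{i+1})`. -/
def Superdense (𝔽 : Type*) [Field 𝔽] (n k : ℕ) (Sk : Finset (Finset (Fin n))) : Prop :=
  ∃ X : ℕ → Finset (Finset (Fin n)),
    X 0 = ∅ ∧ X (simRank 𝔽 n k Sk) = Sk ∧
      (∀ i ≤ simRank 𝔽 n k Sk, SimFlat 𝔽 n k Sk (X i)) ∧
      (∀ i < simRank 𝔽 n k Sk, X i ⊂ X (i + 1)) ∧
      ∀ i < simRank 𝔽 n k Sk, DenseHyp 𝔽 n k (X (i + 1)) (X i)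

/-- `Sim_k^n(S_k)` is triangulable over `𝔽`: the boundaries of the `(k+1)`-faces of `⟨S_k⟩`
span the circuit space `ker ∂_k`. -/
def Triangulable (𝔽 : Type*) [Field 𝔽] (n k : ℕ) (Sk : Finset (Finset (Fin n))) : Prop :=
  Submodule.span 𝔽
      {v : ↥Sk → 𝔽 | ∃ X : Finset (Fin n), X.card = k + 1 ∧ IsFace k Sk X ∧ v = pbdry 𝔽 Sk X}
    = LinearMap.ker (bdryMap 𝔽 n k Sk)

/-- `Sim_k^n(S_k)` is strongly triangulable over `𝔽`: there are `(k+1)`-faces `X_1,…,X_{m'}`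
of `⟨S_k⟩` whose boundaries span `ker ∂_k` and such that every circuit `C` has a
representing vector `C⃗` with support `C` which is a combination, with nonzero coefficients,
of boundaries `∂_{k+1} X_{i_j}` with `⋃_{F ∈ C} F = ⋃_j X_{i_j}`. -/
def StronglyTriangulable (𝔽 : Type*) [Field 𝔽] (n k : ℕ)
    (Sk : Finset (Finset (Fin n))) : Prop :=
  ∃ (m' : ℕ) (Xs : Fin m' → Finset (Fin n)),
    (∀ i, (Xs i).card = k + 1 ∧ IsFace k Sk (Xs i)) ∧
    Submodule.span 𝔽 (Set.range fun i => pbdry 𝔽 Sk (Xs i)) = LinearMap.ker (bdryMap 𝔽 n k Sk) ∧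
    ∀ C, SimCircuit 𝔽 n k Sk C →
      ∃ (s : ℕ) (idx : Fin s → Fin m') (a : Fin s → 𝔽) (Cv : ↥Sk → 𝔽),
        (∀ j, a j ≠ 0) ∧ suppFin Cv = C ∧
        Cv = ∑ j, a j • pbdry 𝔽 Sk (Xs (idx j)) ∧
        C.biUnion id = Finset.univ.biUnion fun j : Fin s => Xs (idx j)

/-- The simple graph `([n], S_2)`. -/
def graphOf {n : ℕ} (S2 : Finset (Finset (Fin n))) : SimpleGraph (Fin n) where
  Adj u v := u ≠ v ∧ ({u, v} : Finset (Fin n)) ∈ S2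
  symm := by
    constructor
    intro u v h
    exact ⟨h.1.symm, by rw [Finset.pair_comm]; exact h.2⟩
  loopless := by constructor; intro u h; exact h.1 rfl

/-- A simple graph is chordal if every cycle of length at least four has a chord, i.e. an
edge of the graph joining two non-consecutive vertices of the cycle. -/
def Chordal {α : Type*} (G : SimpleGraph α) : Prop :=
  ∀ (v : α) (w : G.Walk v v), w.IsCycle → 4 ≤ w.length →
    ∃ u₁ u₂, u₁ ∈ w.support ∧ u₂ ∈ w.support ∧ G.Adj u₁ u₂ ∧ s(u₁, u₂) ∉ w.edges


section AuxStmt6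

variable {n : ℕ}

lemma inc_erase {F : Finset (Fin n)} {i : Fin n} (hi : i ∈ F) :
    inc (F.erase i) F = (-1 : ℤ) ^ (F.filter (fun j => j ≤ i)).card := by
  classical
  unfold inc
  rw [Finset.sum_eq_single i]
  · simp
  · intro l hl hne
    refine if_neg fun h => ?_
    have hl' : l ∈ F.erase i := Finset.mem_erase.2 ⟨hne, hl⟩
    rw [h] at hl'
    exact Finset.notMem_erase l F hl'
  · exact fun h => absurd hi h

lemma inc_eq_zero {W F : Finset (Fin n)} (h : ∀ i ∈ F, W ≠ F.erase i) :
    inc W F = 0 :=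
  Finset.sum_eq_zero fun i hi => if_neg (h i hi)

lemma inc_cast_ne_zero_iff (𝔽 : Type*) [Field 𝔽] {k : ℕ} (hk : 2 ≤ k) {V F : Finset (Fin n)}
    (hV : V.card = k - 1) (hF : F.card = k) :
    ((inc V F : ℤ) : 𝔽) ≠ 0 ↔ V ⊆ F := by
  constructor
  · intro h
    by_contra hVF
    have h0 : inc V F = 0 := inc_eq_zero fun i hi hEq =>
      hVF (hEq ▸ Finset.erase_subset i F)
    rw [h0] at h
    simp at h
  · intro hVF
    have hlt : V.card < F.card := by omega
    have hne : V ≠ F := fun h => by rw [h] at hlt; omega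
    obtain ⟨i, hiF, hiV⟩ := Finset.exists_of_ssubset (ssubset_of_subset_of_ne hVF hne)
    have hVe : V = F.erase i := by
      apply Finset.eq_of_subset_of_card_le (Finset.subset_erase.2 ⟨hVF, hiV⟩)
      rw [Finset.card_erase_of_mem hiF]
      omega
    rw [hVe, inc_erase hiF]
    push_cast
    exact pow_ne_zero _ (by norm_num)

lemma bdry_sq (Y W : Finset (Fin n)) :
    ∑ i ∈ Y, inc (Y.erase i) Y * inc W (Y.erase i) = 0 := by
  classical
  have hstep : ∀ i ∈ Y, inc (Y.erase i) Y * inc W (Y.erase i)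
      = ∑ j ∈ Y.erase i, if W = (Y.erase i).erase j then
          (-1 : ℤ) ^ ((Y.filter (fun l => l ≤ i)).card
            + ((Y.erase i).filter (fun l => l ≤ j)).card) else 0 := by
    intro i hi
    rw [inc_erase hi]
    show _ * inc W (Y.erase i) = _
    unfold inc
    rw [Finset.mul_sum]
    refine Finset.sum_congr rfl fun j hj => ?_
    rw [mul_ite, mul_zero, pow_add]
  rw [Finset.sum_congr rfl hstep, Finset.sum_sigma']
  set A : Fin n → ℕ := fun i => (Y.filter (fun l => l ≤ i)).card with hA
  set B : Fin n → Fin n → ℕ := fun i j => ((Y.erase i).filter (fun l => l ≤ j)).card with hBdef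
  have hB : ∀ i j : Fin n, i ∈ Y → j ∈ Y → i < j → B i j + 1 = A j ∧ B j i = A i := by
    intro i j hi hj hij
    constructor
    · have hmem : i ∈ Y.filter (fun l => l ≤ j) := Finset.mem_filter.2 ⟨hi, le_of_lt hij⟩
      have hpos : 0 < A j := Finset.card_pos.2 ⟨j, Finset.mem_filter.2 ⟨hj, le_refl j⟩⟩
      have : B i j = A j - 1 := by
        show ((Y.erase i).filter (fun l => l ≤ j)).card = _
        rw [Finset.filter_erase, Finset.card_erase_of_mem hmem]
      omega
    · have hnot : j ∉ Y.filter (fun l => l ≤ i) := fun h =>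
        absurd (Finset.mem_filter.1 h).2 (not_le.2 hij)
      show ((Y.erase j).filter (fun l => l ≤ i)).card = _
      rw [Finset.filter_erase, Finset.erase_eq_of_notMem hnot]
  refine Finset.sum_involution (fun p _ => ⟨p.2, p.1⟩) ?_ ?_ ?_ ?_
  · rintro ⟨i, j⟩ hp
    have hj : j ∈ Y.erase i := (Finset.mem_sigma.1 hp).2
    have hi : i ∈ Y := (Finset.mem_sigma.1 hp).1
    have hjY : j ∈ Y := Finset.mem_of_mem_erase hj
    have hne : j ≠ i := Finset.ne_of_mem_erase hj
    show (if W = (Y.erase i).erase j then (-1 : ℤ) ^ (A i + B i j) else 0)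
      + (if W = (Y.erase j).erase i then (-1 : ℤ) ^ (A j + B j i) else 0) = 0
    by_cases hW : W = (Y.erase i).erase j
    · rw [if_pos hW, if_pos (by rw [hW, Finset.erase_right_comm])]
      have hkey : A i + B i j = A j + B j i + 1 ∨ A j + B j i = A i + B i j + 1 := by
        rcases hne.lt_or_gt with h | h
        · obtain ⟨h1, h2⟩ := hB j i hjY hi h
          left; omega
        · obtain ⟨h1, h2⟩ := hB i j hi hjY h
          right; omega
      rcases hkey with h | h <;> rw [h, pow_succ] <;> ring
    · rw [if_neg hW, if_neg (by rw [Finset.erase_right_comm]; exact hW), add_zero]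
  · rintro ⟨i, j⟩ hp _
    have hj : j ∈ Y.erase i := (Finset.mem_sigma.1 hp).2
    intro h
    exact (Finset.ne_of_mem_erase hj) (congrArg Sigma.fst h)
  · rintro ⟨i, j⟩ hp
    have hj : j ∈ Y.erase i := (Finset.mem_sigma.1 hp).2
    have hi : i ∈ Y := (Finset.mem_sigma.1 hp).1
    dsimp only
    exact Finset.mem_sigma.2 ⟨Finset.mem_of_mem_erase hj,
      Finset.mem_erase.2 ⟨fun h => Finset.ne_of_mem_erase hj h.symm, hi⟩⟩
  · rintro ⟨i, j⟩ hp
    rfl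

lemma bdry_sq_vec (𝔽 : Type*) [Field 𝔽] (k : ℕ) (Y : Finset (Fin n)) :
    ∑ i ∈ Y, ((inc (Y.erase i) Y : ℤ) : 𝔽) • bvec 𝔽 n k (Y.erase i) = 0 := by
  funext W
  simp only [Finset.sum_apply, Pi.smul_apply, bvec, smul_eq_mul, Pi.zero_apply]
  have h := bdry_sq Y W.1
  calc ∑ i ∈ Y, ((inc (Y.erase i) Y : ℤ) : 𝔽) * ((inc W.1 (Y.erase i) : ℤ) : 𝔽)
      = ((∑ i ∈ Y, inc (Y.erase i) Y * inc W.1 (Y.erase i) : ℤ) : 𝔽) := by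
        push_cast; rfl
    _ = 0 := by rw [h]; exact Int.cast_zero

lemma exists_facet {k : ℕ} (Sk : Finset (Finset (Fin n))) {F : Finset (Fin n)}
    (hF : IsFace k Sk F) : ∃ G, IsFacet k Sk G ∧ F ⊆ G := by
  classical
  obtain ⟨G, hG, hmax⟩ := Finset.exists_max_image
    (Finset.univ.filter fun G => IsFace k Sk G ∧ F ⊆ G) Finset.card
    ⟨F, by simp [hF]⟩
  simp only [Finset.mem_filter, Finset.mem_univ, true_and] at hG
  refine ⟨G, ⟨hG.1, ?_⟩, hG.2⟩
  intro G' hG' hsub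
  refine Finset.eq_of_subset_of_card_le hsub (hmax G' ?_)
  simp only [Finset.mem_filter, Finset.mem_univ, true_and]
  exact ⟨hG', hG.2.trans hsub⟩

lemma mem_suppδ (𝔽 : Type*) [Field 𝔽] {Sk : Finset (Finset (Fin n))} {V F : Finset (Fin n)} :
    F ∈ suppδ 𝔽 Sk V ↔ F ∈ Sk ∧ ((inc V F : ℤ) : 𝔽) ≠ 0 := by
  classical
  simp only [suppδ, suppFin, cobdry, Finset.mem_image, Finset.mem_filter, Finset.mem_attach,
    true_and]
  constructor
  · rintro ⟨⟨G, hG⟩, hne, rfl⟩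
    exact ⟨hG, (Finset.mem_filter.1 hne).2⟩
  · rintro ⟨hF, hne⟩
    exact ⟨⟨F, hF⟩, Finset.mem_filter.2 ⟨Finset.mem_attach _ _, hne⟩, rfl⟩

end AuxStmt6

theorem stmt6 (𝔽 : Type*) [Field 𝔽] (n k : ℕ) (hk : 2 ≤ k) (hkn : k ≤ n)
    (Sk : Finset (Finset (Fin n))) (hSk : ∀ F ∈ Sk, F.card = k)
    (V : Finset (Fin n)) (hV : V.card = k - 1) (hsimp : SimplicialFace k Sk V) :
    SimCocircuit 𝔽 n k Sk (suppδ 𝔽 Sk V) := by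
  classical
  obtain ⟨X, ⟨hXfacet, hVX⟩, hXuniq⟩ := hsimp
  set D := suppδ 𝔽 Sk V with hD
  have hDsub : D ⊆ Sk := fun F hF => ((mem_suppδ 𝔽).1 hF).1
  have hXcard : k ≤ X.card := by
    have := Finset.card_lt_card hVX
    omega
  have hXface : ∀ G ⊆ X, G.card = k → G ∈ Sk := by
    rcases hXfacet.1 with h | h
    · exact absurd hXcard (by omega)
    · exact h
  have hmemD : ∀ F, F ∈ D ↔ F ∈ Sk ∧ V ⊆ F := by
    intro F
    rw [hD, mem_suppδ]
    constructor
    · rintro ⟨h1, h2⟩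
      exact ⟨h1, (inc_cast_ne_zero_iff 𝔽 hk hV (hSk F h1)).1 h2⟩
    · rintro ⟨h1, h2⟩
      exact ⟨h1, (inc_cast_ne_zero_iff 𝔽 hk hV (hSk F h1)).2 h2⟩
  have hDX : ∀ F ∈ D, F ⊆ X := by
    intro F hF
    obtain ⟨hFSk, hVF⟩ := (hmemD F).1 hF
    have hFface : IsFace k Sk F := Or.inr fun G hG hGc => by
      rwa [Finset.eq_of_subset_of_card_le hG (by rw [hSk F hFSk, hGc])]
    obtain ⟨G, hGfacet, hFG⟩ := exists_facet Sk hFface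
    have hcard : F.card ≤ G.card := Finset.card_le_card hFG
    have hVG : V ⊂ G := by
      refine ssubset_of_subset_of_ne (hVF.trans hFG) fun h => ?_
      have := hSk F hFSk
      rw [← h] at hcard
      omega
    have hGX : G = X := hXuniq G ⟨hGfacet, hVG⟩
    exact hGX ▸ hFG
  obtain ⟨F₁, hVF₁, hF₁X, hF₁c⟩ :=
    Finset.exists_subsuperset_card_eq hVX.subset (by omega) hXcard
  have hF₁Sk : F₁ ∈ Sk := hXface F₁ hF₁X hF₁c
  have hF₁D : F₁ ∈ D := (hmemD F₁).2 ⟨hF₁Sk, hVF₁⟩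
  refine ⟨hDsub, ?_, ?_⟩
  · -- strict rank drop
    unfold simRank
    apply Submodule.finrank_lt_finrank_of_lt
    refine lt_of_le_of_ne (Submodule.span_mono (Set.image_mono (by
      rw [Finset.coe_sdiff]; exact Set.diff_subset))) fun hEq => ?_
    have hle : Submodule.span 𝔽 ((fun F => bvec 𝔽 n k F) '' (((Sk \ D) : Finset _) : Set _))
        ≤ LinearMap.ker (LinearMap.proj (R := 𝔽) (⟨V, hV⟩ : Csets n (k - 1))) := by
      rw [Submodule.span_le]
      rintro v ⟨F, hF, rfl⟩
      have hF' : F ∈ Sk ∧ F ∉ D := Finset.mem_sdiff.1 (Finset.mem_coe.1 hF)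
      simp only [SetLike.mem_coe, LinearMap.mem_ker, LinearMap.proj_apply]
      show ((inc V F : ℤ) : 𝔽) = 0
      by_contra hne
      exact hF'.2 ((mem_suppδ 𝔽).2 ⟨hF'.1, hne⟩)
    have hmem : bvec 𝔽 n k F₁ ∈
        Submodule.span 𝔽 ((fun F => bvec 𝔽 n k F) '' (((Sk \ D) : Finset _) : Set _)) := by
      rw [hEq]
      exact Submodule.subset_span ⟨F₁, Finset.mem_coe.2 hF₁Sk, rfl⟩
    have hzero : bvec 𝔽 n k F₁ (⟨V, hV⟩ : Csets n (k - 1)) = 0 := hle hmem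
    have hnz : ((inc V F₁ : ℤ) : 𝔽) ≠ 0 := ((mem_suppδ 𝔽).1 hF₁D).2
    exact hnz hzero
  · -- removing a proper subset keeps the rank
    intro C' hC'
    obtain ⟨F₀, hF₀D, hF₀C'⟩ := Finset.exists_of_ssubset hC'
    have hspan : Submodule.span 𝔽 ((fun F => bvec 𝔽 n k F) '' (((Sk \ C') : Finset _) : Set _))
        = Submodule.span 𝔽 ((fun F => bvec 𝔽 n k F) '' (Sk : Set _)) := by
      refine le_antisymm (Submodule.span_mono (Set.image_mono (by
        rw [Finset.coe_sdiff]; exact Set.diff_subset))) ?_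
      rw [Submodule.span_le]
      rintro v ⟨F, hF, rfl⟩
      have hFSk : F ∈ Sk := Finset.mem_coe.1 hF
      show bvec 𝔽 n k F ∈ _
      by_cases hFC : F ∈ C'
      · have hFD : F ∈ D := hC'.subset hFC
        obtain ⟨-, hVF⟩ := (hmemD F).1 hFD
        obtain ⟨-, hVF₀⟩ := (hmemD F₀).1 hF₀D
        have hFX := hDX F hFD
        have hF₀X := hDX F₀ hF₀D
        have hFc : F.card = k := hSk F hFSk
        have hF₀c : F₀.card = k := hSk F₀ (hDsub hF₀D)
        have hne : F ≠ F₀ := fun h => hF₀C' (h ▸ hFC)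
        set Y := F ∪ F₀ with hY
        have hInt : F ∩ F₀ = V := by
          have h1 : V ⊆ F ∩ F₀ := Finset.subset_inter hVF hVF₀
          have h2 : F ∩ F₀ ≠ F := fun h =>
            hne (Finset.eq_of_subset_of_card_le (Finset.inter_eq_left.1 h) (by omega))
          have h3 : (F ∩ F₀).card < k := by
            have := Finset.card_lt_card (ssubset_of_subset_of_ne Finset.inter_subset_left h2)
            omega
          have h4 : k - 1 ≤ (F ∩ F₀).card := hV ▸ Finset.card_le_card h1
          exact (Finset.eq_of_subset_of_card_le h1 (by omega)).symm
        have hYc : Y.card = k + 1 := by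
          have := Finset.card_union_add_card_inter F F₀
          rw [← hY, hInt, hFc, hF₀c, hV] at this
          omega
        have hYX : Y ⊆ X := Finset.union_subset hFX hF₀X
        have hYmem : ∀ i ∈ Y, Y.erase i ∈ Sk := fun i hi =>
          hXface _ ((Finset.erase_subset i Y).trans hYX)
            (by rw [Finset.card_erase_of_mem hi, hYc]; omega)
        have hsdne : (F₀ \ F).Nonempty := by
          rw [Finset.sdiff_nonempty]
          exact fun h => hne (Finset.eq_of_subset_of_card_le h (by omega)).symm
        obtain ⟨i₀, hi₀⟩ := hsdne
        have hi₀F₀ : i₀ ∈ F₀ := (Finset.mem_sdiff.1 hi₀).1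
        have hi₀F : i₀ ∉ F := (Finset.mem_sdiff.1 hi₀).2
        have hi₀Y : i₀ ∈ Y := Finset.mem_union_right _ hi₀F₀
        have hYF : Y.erase i₀ = F := by
          refine (Finset.eq_of_subset_of_card_le
            (Finset.subset_erase.2 ⟨Finset.subset_union_left, hi₀F⟩) ?_).symm
          rw [Finset.card_erase_of_mem hi₀Y, hYc, hFc]
          omega
        have hsd1 : (F₀ \ F).card = 1 := by
          have := Finset.card_sdiff_add_card_inter F₀ F
          rw [Finset.inter_comm, hInt, hF₀c, hV] at this
          omega
        have hsum := bdry_sq_vec 𝔽 (n := n) k Y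
        rw [← Finset.add_sum_erase _ _ hi₀Y] at hsum
        set c : 𝔽 := ((inc (Y.erase i₀) Y : ℤ) : 𝔽) with hc
        have hcne : c ≠ 0 := by
          rw [hc, inc_erase hi₀Y]
          push_cast
          exact pow_ne_zero _ (by norm_num)
        have hrest : ∀ i ∈ Y.erase i₀, bvec 𝔽 n k (Y.erase i) ∈
            Submodule.span 𝔽 ((fun F => bvec 𝔽 n k F) '' (((Sk \ C') : Finset _) : Set _)) := by
          intro i hi
          have hiY : i ∈ Y := Finset.mem_of_mem_erase hi
          have hii₀ : i ≠ i₀ := Finset.ne_of_mem_erase hi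
          have hSkmem : Y.erase i ∈ Sk := hYmem i hiY
          by_cases hiF₀ : i ∈ F₀
          · by_cases hiF : i ∈ F
            · have hiV : i ∈ V := hInt ▸ Finset.mem_inter.2 ⟨hiF, hiF₀⟩
              have hnotD : Y.erase i ∉ D := fun hmem =>
                (Finset.notMem_erase i Y) (((hmemD _).1 hmem).2 hiV)
              have hmem' : Y.erase i ∈ Sk \ C' :=
                Finset.mem_sdiff.2 ⟨hSkmem, fun hc' => hnotD (hC'.subset hc')⟩
              exact Submodule.subset_span ⟨_, Finset.mem_coe.2 hmem', rfl⟩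
            · exact absurd (Finset.card_le_one.1 hsd1.le i (Finset.mem_sdiff.2 ⟨hiF₀, hiF⟩)
                i₀ hi₀) hii₀
          · have hiF : i ∈ F := (Finset.mem_union.1 hiY).resolve_right hiF₀
            have hYF₀ : Y.erase i = F₀ := by
              refine (Finset.eq_of_subset_of_card_le
                (Finset.subset_erase.2 ⟨Finset.subset_union_right, hiF₀⟩) ?_).symm
              rw [Finset.card_erase_of_mem hiY, hYc, hF₀c]
              omega
            rw [hYF₀]
            exact Submodule.subset_span
              ⟨F₀, Finset.mem_coe.2 (Finset.mem_sdiff.2 ⟨hDsub hF₀D, hF₀C'⟩), rfl⟩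
        have hS : (∑ i ∈ Y.erase i₀, ((inc (Y.erase i) Y : ℤ) : 𝔽) • bvec 𝔽 n k (Y.erase i)) ∈
            Submodule.span 𝔽 ((fun F => bvec 𝔽 n k F) '' (((Sk \ C') : Finset _) : Set _)) :=
          Submodule.sum_mem _ fun i hi => Submodule.smul_mem _ _ (hrest i hi)
        have hcF : c • bvec 𝔽 n k F
            = -∑ i ∈ Y.erase i₀, ((inc (Y.erase i) Y : ℤ) : 𝔽) • bvec 𝔽 n k (Y.erase i) := by
          rw [← hYF]
          exact eq_neg_of_add_eq_zero_left hsum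
        have hfinal : bvec 𝔽 n k F = c⁻¹ • (c • bvec 𝔽 n k F) := (inv_smul_smul₀ hcne _).symm
        rw [hfinal, hcF]
        exact Submodule.smul_mem _ _ (Submodule.neg_mem _ hS)
      · exact Submodule.subset_span
          ⟨F, Finset.mem_coe.2 (Finset.mem_sdiff.2 ⟨hFSk, hFC⟩), rfl⟩
    unfold simRank
    rw [hspan]
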